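/- Let m and n be positive integers and let Ψ be a random m×n real matrix whose rows are independent and whose entries within each row are 4-wise independent random variables, each uniformly distributed on {−1/√m, +1/√m}. Then for any fixed vectors u, v ∈ ℝⁿ, the variance of the sketched inner product satisfies Var(⟨Ψu, Ψv⟩) ≤ (2/m)·‖u‖₂²·‖v‖₂². -/

import Mathlib

open scoped BigOperators
open Matrix MeasureTheory ProbabilityTheory

/-- The Euclidean (ℓ2) norm of a vector in ℝⁿ. -/
noncomputable def l2norm {n : ℕ} (x : Fin n → ℝ) : ℝ := Real.sqrt (∑ i, x i ^ 2)

/-- The Euclidean inner product of two vectors. -/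
def ip {n : ℕ} (x y : Fin n → ℝ) : ℝ := ∑ i, x i * y i

section Aux
variable {Ω : Type*} [MeasurableSpace Ω] {μ : Measure Ω}

lemma aux_integral_finset_prod {ι : Type*} {f : ι → Ω → ℝ} [IsProbabilityMeasure μ]
    (hind : iIndepFun f μ) (hmeas : ∀ i, Measurable (f i))
    (s : Finset ι) :
    ∫ ω, ∏ i ∈ s, f i ω ∂μ = ∏ i ∈ s, ∫ ω, f i ω ∂μ := by
  classical
  induction s using Finset.induction_on with
  | empty => simp
  | @insert i s hi ih =>
    have h1 : IndepFun (∏ j ∈ s, f j) (f i) μ :=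
      hind.indepFun_finsetProd_of_notMem hmeas hi
    have hfe : (∏ j ∈ s, f j) = fun ω => ∏ j ∈ s, f j ω :=
      funext fun ω => Finset.prod_apply ω s f
    have h2 : IndepFun (f i) (fun ω => ∏ j ∈ s, f j ω) μ := by
      rw [← hfe]; exact h1.symm
    simp only [Finset.prod_insert hi]
    rw [show (fun ω => f i ω * ∏ j ∈ s, f j ω) = fun ω => f i ω * (fun ω' => ∏ j ∈ s, f j ω') ω
      from rfl]
    rw [h2.integral_fun_mul_eq_mul_integral (hmeas i).aestronglyMeasurable
      (by exact (Finset.measurable_prod s fun j _ => hmeas j).aestronglyMeasurable), ih]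

lemma aux_variance_congr {X Y : Ω → ℝ} (h : X =ᵐ[μ] Y) : variance X μ = variance Y μ := by
  have h1 : μ[X] = μ[Y] := integral_congr_ae h
  unfold variance evariance
  rw [h1]
  congr 1
  apply lintegral_congr_ae
  filter_upwards [h] with ω hω
  rw [hω]

lemma aux_variance_const_add [IsProbabilityMeasure μ] (c : ℝ) {Z : Ω → ℝ}
    (hZ : Integrable Z μ) :
    variance (fun ω => c + Z ω) μ = variance Z μ := by
  have h1 : μ[fun ω => c + Z ω] = c + μ[Z] := by
    rw [integral_add (integrable_const c) hZ]; simp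
  unfold variance evariance
  rw [h1]
  congr 1
  apply lintegral_congr
  intro ω
  congr 2
  ring

/-- Variance bound for one row of the AMS sketch. -/
lemma aux_row_variance [IsProbabilityMeasure μ] {n : ℕ} {ψ : Fin n → Ω → ℝ} {a : ℝ}
    (ha : 0 < a)
    (hmeas : ∀ j, Measurable (ψ j))
    (h4 : ∀ s : Finset (Fin n), s.card ≤ 4 →
      iIndepFun (fun j : {j // j ∈ s} => ψ j.1) μ)
    (hae : ∀ j, ∀ᵐ ω ∂μ, ψ j ω = a ∨ ψ j ω = -a)
    (hmean : ∀ j, ∫ ω, ψ j ω ∂μ = 0)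
    (u v : Fin n → ℝ) :
    MemLp (fun ω => (∑ j, ψ j ω * u j) * (∑ j, ψ j ω * v j)) 2 μ ∧
    variance (fun ω => (∑ j, ψ j ω * u j) * (∑ j, ψ j ω * v j)) μ ≤
      2 * a ^ 4 * (∑ j, u j ^ 2) * (∑ j, v j ^ 2) := by
  classical
  set Y : Ω → ℝ := fun ω => (∑ j, ψ j ω * u j) * (∑ j, ψ j ω * v j) with hY
  -- basic a.e. facts
  have habs : ∀ j, ∀ᵐ ω ∂μ, |ψ j ω| = a := by
    intro j
    filter_upwards [hae j] with ω hω
    rcases hω with h | h <;> rw [h] <;> simp [abs_of_pos ha, abs_of_neg, ha.le, ha]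
  have hsq : ∀ j, ∀ᵐ ω ∂μ, ψ j ω ^ 2 = a ^ 2 := by
    intro j
    filter_upwards [hae j] with ω hω
    rcases hω with h | h <;> rw [h] <;> ring
  have haeAll : ∀ᵐ ω ∂μ, ∀ j, ψ j ω ^ 2 = a ^ 2 := ae_all_iff.2 hsq
  have habsAll : ∀ᵐ ω ∂μ, ∀ j, |ψ j ω| = a := ae_all_iff.2 habs
  -- measurability of products
  have hmeas2 : ∀ j k : Fin n, Measurable fun ω => ψ j ω * ψ k ω := fun j k =>
    (hmeas j).mul (hmeas k)
  have hmeas4 : ∀ j k l p : Fin n, Measurable fun ω => (ψ j ω * ψ k ω) * (ψ l ω * ψ p ω) :=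
    fun j k l p => (hmeas2 j k).mul (hmeas2 l p)
  -- integrability of products
  have hint2 : ∀ j k : Fin n, Integrable (fun ω => ψ j ω * ψ k ω) μ := by
    intro j k
    refine (integrable_const (a ^ 2)).mono' (hmeas2 j k).aestronglyMeasurable ?_
    filter_upwards [habs j, habs k] with ω h1 h2
    rw [Real.norm_eq_abs, abs_mul, h1, h2]
    ring_nf
    exact le_rfl
  have hint4 : ∀ j k l p : Fin n,
      Integrable (fun ω => (ψ j ω * ψ k ω) * (ψ l ω * ψ p ω)) μ := by
    intro j k l p
    refine (integrable_const (a ^ 4)).mono' (hmeas4 j k l p).aestronglyMeasurable ?_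
    filter_upwards [habs j, habs k, habs l, habs p] with ω h1 h2 h3 h4
    rw [Real.norm_eq_abs, abs_mul, abs_mul, abs_mul, h1, h2, h3, h4]
    ring_nf
    exact le_rfl
  -- pairwise independence
  have hInd2 : ∀ j k : Fin n, j ≠ k → IndepFun (ψ j) (ψ k) μ := by
    intro j k hjk
    have hcard : ({j, k} : Finset (Fin n)).card ≤ 4 := by
      rw [Finset.card_pair hjk]; omega
    have h := h4 {j, k} hcard
    exact h.indepFun (i := ⟨j, by simp⟩) (j := ⟨k, by simp⟩)
      (by simp [Subtype.ext_iff, hjk])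
  have I2 : ∀ j k : Fin n, j ≠ k → ∫ ω, ψ j ω * ψ k ω ∂μ = 0 := by
    intro j k hjk
    rw [(hInd2 j k hjk).integral_fun_mul_eq_mul_integral (hmeas j).aestronglyMeasurable
      (hmeas k).aestronglyMeasurable, hmean j, zero_mul]
  -- expectation with a repeated square factor
  have Z3 : ∀ x j k : Fin n, j ≠ k → ∫ ω, ψ x ω ^ 2 * (ψ j ω * ψ k ω) ∂μ = 0 := by
    intro x j k hjk
    have hcongr : (fun ω => ψ x ω ^ 2 * (ψ j ω * ψ k ω)) =ᵐ[μ]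
        fun ω => a ^ 2 * (ψ j ω * ψ k ω) := by
      filter_upwards [hsq x] with ω hω
      rw [hω]
    rw [integral_congr_ae hcongr, integral_const_mul, I2 j k hjk, mul_zero]
  -- four distinct indices
  have I4 : ∀ j k l p : Fin n, j ≠ k → j ≠ l → j ≠ p → k ≠ l → k ≠ p → l ≠ p →
      ∫ ω, (ψ j ω * ψ k ω) * (ψ l ω * ψ p ω) ∂μ = 0 := by
    intro j k l p hjk hjl hjp hkl hkp hlp
    set s : Finset (Fin n) := {j, k, l, p} with hs
    have hcard : s.card ≤ 4 := by
      refine le_trans (Finset.card_insert_le _ _) ?_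
      refine le_trans (Nat.add_le_add_right (Finset.card_insert_le _ _) 1) ?_
      refine le_trans (Nat.add_le_add_right (Nat.add_le_add_right
        (Finset.card_insert_le _ _) 1) 1) ?_
      simp
    have hind := h4 s hcard
    have hprod := aux_integral_finset_prod hind (fun x => hmeas x.1) Finset.univ
    have hL : ∀ ω, ∏ x : {x // x ∈ s}, ψ x.1 ω = (ψ j ω * ψ k ω) * (ψ l ω * ψ p ω) := by
      intro ω
      rw [Finset.prod_coe_sort s (fun i => ψ i ω)]
      rw [hs]
      rw [Finset.prod_insert (by simp [hjk, hjl, hjp]),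
        Finset.prod_insert (by simp [hkl, hkp]),
        Finset.prod_insert (by simp [hlp]), Finset.prod_singleton]
      ring
    have hR : (∏ x : {x // x ∈ s}, ∫ ω, ψ x.1 ω ∂μ) = 0 := by
      apply Finset.prod_eq_zero (Finset.mem_univ (⟨j, by simp [hs]⟩ : {x // x ∈ s}))
      exact hmean j
    calc ∫ ω, (ψ j ω * ψ k ω) * (ψ l ω * ψ p ω) ∂μ
        = ∫ ω, ∏ x : {x // x ∈ s}, ψ x.1 ω ∂μ := by
          apply integral_congr_ae; filter_upwards with ω; rw [hL]
      _ = ∏ x : {x // x ∈ s}, ∫ ω, ψ x.1 ω ∂μ := hprod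
      _ = 0 := hR
  -- the master fourth-moment formula on off-diagonal pairs
  have E4 : ∀ j k l p : Fin n, j ≠ k → l ≠ p →
      ∫ ω, (ψ j ω * ψ k ω) * (ψ l ω * ψ p ω) ∂μ =
        a ^ 4 * ((if (l, p) = (j, k) then (1:ℝ) else 0) +
          (if (l, p) = (k, j) then (1:ℝ) else 0)) := by
    intro j k l p hjk hlp
    by_cases hjl : j = l
    · subst hjl
      by_cases hkp : k = p
      · subst hkp
        -- value a^4
        have hcongr : (fun ω => (ψ j ω * ψ k ω) * (ψ j ω * ψ k ω)) =ᵐ[μ]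
            fun _ => a ^ 4 := by
          filter_upwards [hsq j, hsq k] with ω h1 h2
          have : (ψ j ω * ψ k ω) * (ψ j ω * ψ k ω) = ψ j ω ^ 2 * ψ k ω ^ 2 := by ring
          rw [this, h1, h2]; ring
        rw [integral_congr_ae hcongr, integral_const]
        simp only [measure_univ, ENNReal.toReal_one, probReal_univ, one_smul]
        simp only [Prod.mk.injEq]
        rw [if_pos (by simp), if_neg (fun h => hjk h.1)]
        ring
      · -- j = l, k ≠ p : ψ_j^2 ψ_k ψ_p
        have hcongr : (fun ω => (ψ j ω * ψ k ω) * (ψ j ω * ψ p ω)) =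
            fun ω => ψ j ω ^ 2 * (ψ k ω * ψ p ω) := by funext ω; ring
        rw [hcongr, Z3 j k p hkp]
        simp only [Prod.mk.injEq]
        rw [if_neg (fun h => hkp h.2.symm), if_neg (fun h => hjk h.1)]
        ring
    · by_cases hjp : j = p
      · subst hjp
        by_cases hkl : k = l
        · subst hkl
          have hcongr : (fun ω => (ψ j ω * ψ k ω) * (ψ k ω * ψ j ω)) =ᵐ[μ]
              fun _ => a ^ 4 := by
            filter_upwards [hsq j, hsq k] with ω h1 h2
            have : (ψ j ω * ψ k ω) * (ψ k ω * ψ j ω) = ψ j ω ^ 2 * ψ k ω ^ 2 := by ring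
            rw [this, h1, h2]; ring
          rw [integral_congr_ae hcongr, integral_const]
          simp only [measure_univ, ENNReal.toReal_one, probReal_univ, one_smul]
          simp only [Prod.mk.injEq]
          rw [if_neg (fun h : k = j ∧ j = k => hjk h.1.symm)]
          simp
        · -- j = p, k ≠ l : ψ_j^2 ψ_k ψ_l with k ≠ l
          have hcongr : (fun ω => (ψ j ω * ψ k ω) * (ψ l ω * ψ j ω)) =
              fun ω => ψ j ω ^ 2 * (ψ k ω * ψ l ω) := by funext ω; ring
          rw [hcongr, Z3 j k l hkl]
          simp only [Prod.mk.injEq]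
          rw [if_neg (fun h => hjk h.2), if_neg (fun h => hkl h.1.symm)]
          ring
      · by_cases hkl : k = l
        · subst hkl
          -- k = l, j ≠ p (and j ≠ l = k given), ψ_k^2 ψ_j ψ_p with j ≠ p
          have hcongr : (fun ω => (ψ j ω * ψ k ω) * (ψ k ω * ψ p ω)) =
              fun ω => ψ k ω ^ 2 * (ψ j ω * ψ p ω) := by funext ω; ring
          rw [hcongr, Z3 k j p hjp]
          simp only [Prod.mk.injEq]
          rw [if_neg (fun h => hjk h.1.symm), if_neg (fun h => hjp h.2.symm)]
          ring
        · by_cases hkp : k = p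
          · subst hkp
            have hcongr : (fun ω => (ψ j ω * ψ k ω) * (ψ l ω * ψ k ω)) =
                fun ω => ψ k ω ^ 2 * (ψ j ω * ψ l ω) := by funext ω; ring
            rw [hcongr, Z3 k j l hjl]
            simp only [Prod.mk.injEq]
            rw [if_neg (fun h => hjl h.1.symm), if_neg (fun h => hjk h.2.symm)]
            ring
          · -- all distinct
            rw [I4 j k l p hjk hjl hjp hkl hkp hlp]
            simp only [Prod.mk.injEq]
            rw [if_neg (fun h => hjl h.1.symm), if_neg (fun h => hkl h.1.symm)]
            ring
  -- the centered off-diagonal sum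
  set od := (Finset.univ : Finset (Fin n)).offDiag with hod
  set c : Fin n × Fin n → ℝ := fun P => u P.1 * v P.2 with hc
  set Z : Ω → ℝ := fun ω => ∑ P ∈ od, c P * (ψ P.1 ω * ψ P.2 ω) with hZdef
  have hZmeas : Measurable Z := by
    apply Finset.measurable_sum
    intro P _
    exact (hmeas2 P.1 P.2).const_mul _
  have hZint : Integrable Z μ :=
    integrable_finset_sum _ fun P _ => (hint2 P.1 P.2).const_mul _
  have hZmean : ∫ ω, Z ω ∂μ = 0 := by
    rw [hZdef]
    rw [integral_finset_sum _ fun P _ => (hint2 P.1 P.2).const_mul _]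
    apply Finset.sum_eq_zero
    intro P hP
    rw [integral_const_mul, I2 P.1 P.2 (Finset.mem_offDiag.1 hP).2.2, mul_zero]
  have hZbd : ∀ᵐ ω ∂μ, ‖Z ω‖ ≤ ∑ P ∈ od, |c P| * a ^ 2 := by
    filter_upwards [habsAll] with ω hω
    rw [Real.norm_eq_abs]
    refine le_trans (Finset.abs_sum_le_sum_abs _ _) (le_of_eq ?_)
    apply Finset.sum_congr rfl
    intro P _
    rw [abs_mul, abs_mul, abs_mul, hω P.1, hω P.2]
    ring
  have hZmem : MemLp Z 2 μ := MemLp.of_bound hZmeas.aestronglyMeasurable _ hZbd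
  -- second moment of Z
  have hsq_expand : ∀ ω, Z ω ^ 2 = ∑ P ∈ od, ∑ Q ∈ od,
      (c P * c Q) * ((ψ P.1 ω * ψ P.2 ω) * (ψ Q.1 ω * ψ Q.2 ω)) := by
    intro ω
    rw [hZdef]
    rw [sq, Finset.sum_mul_sum]
    refine Finset.sum_congr rfl fun P _ => Finset.sum_congr rfl fun Q _ => by ring
  have step1 : ∫ ω, Z ω ^ 2 ∂μ = ∑ P ∈ od, ∑ Q ∈ od,
      (c P * c Q) * ∫ ω, (ψ P.1 ω * ψ P.2 ω) * (ψ Q.1 ω * ψ Q.2 ω) ∂μ := by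
    simp_rw [hsq_expand]
    rw [integral_finset_sum _ fun P _ =>
      integrable_finset_sum _ fun Q _ => (hint4 _ _ _ _).const_mul _]
    refine Finset.sum_congr rfl fun P _ => ?_
    rw [integral_finset_sum _ fun Q _ => (hint4 _ _ _ _).const_mul _]
    exact Finset.sum_congr rfl fun Q _ => integral_const_mul _ _
  have step2 : ∀ P ∈ od, (∑ Q ∈ od,
      (c P * c Q) * ∫ ω, (ψ P.1 ω * ψ P.2 ω) * (ψ Q.1 ω * ψ Q.2 ω) ∂μ) =
      a ^ 4 * (c P ^ 2 + c P * c (P.2, P.1)) := by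
    intro P hP
    obtain ⟨-, -, hPne⟩ := Finset.mem_offDiag.1 hP
    have hterm : ∀ Q ∈ od, (c P * c Q) *
        ∫ ω, (ψ P.1 ω * ψ P.2 ω) * (ψ Q.1 ω * ψ Q.2 ω) ∂μ =
        (if Q = (P.1, P.2) then a ^ 4 * (c P * c Q) else 0) +
        (if Q = (P.2, P.1) then a ^ 4 * (c P * c Q) else 0) := by
      intro Q hQ
      obtain ⟨-, -, hQne⟩ := Finset.mem_offDiag.1 hQ
      rw [E4 P.1 P.2 Q.1 Q.2 hPne hQne]
      have hQeta : (Q.1, Q.2) = Q := rfl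
      rw [hQeta]
      by_cases h1 : Q = (P.1, P.2) <;> by_cases h2 : Q = (P.2, P.1)
      · exfalso
        rw [h1] at h2
        exact hPne (congrArg Prod.fst h2)
      · rw [if_pos h1, if_neg h2, if_pos h1, if_neg h2]
        ring
      · rw [if_neg h1, if_pos h2, if_neg h1, if_pos h2]
        ring
      · rw [if_neg h1, if_neg h2, if_neg h1, if_neg h2]
        ring
    rw [Finset.sum_congr rfl hterm, Finset.sum_add_distrib,
      Finset.sum_ite_eq' od (P.1, P.2) (fun Q => a ^ 4 * (c P * c Q)),
      Finset.sum_ite_eq' od (P.2, P.1) (fun Q => a ^ 4 * (c P * c Q))]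
    have hmem1 : (P.1, P.2) ∈ od := by
      have : (P.1, P.2) = P := rfl
      rw [this]; exact hP
    have hmem2 : (P.2, P.1) ∈ od :=
      Finset.mem_offDiag.2 ⟨Finset.mem_univ _, Finset.mem_univ _, fun h => hPne h.symm⟩
    rw [if_pos hmem1, if_pos hmem2]
    have : c (P.1, P.2) = c P := rfl
    rw [this]
    ring
  have hZ2 : ∫ ω, Z ω ^ 2 ∂μ = a ^ 4 * ∑ P ∈ od, (c P ^ 2 + c P * c (P.2, P.1)) := by
    rw [step1, Finset.sum_congr rfl step2, Finset.mul_sum]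
  -- the combinatorial bound
  have hswap_sum : ∑ P ∈ od, c (P.2, P.1) ^ 2 = ∑ P ∈ od, c P ^ 2 := by
    apply Finset.sum_equiv (Equiv.prodComm (Fin n) (Fin n))
    · intro P
      simp only [hod, Finset.mem_offDiag, Finset.mem_univ, true_and, Equiv.prodComm_apply,
        Prod.fst_swap, Prod.snd_swap]
      exact ⟨fun h => h.symm, fun h => h.symm⟩
    · intro P _
      rfl
  have hsum_bound : ∑ P ∈ od, (c P ^ 2 + c P * c (P.2, P.1)) ≤
      2 * ((∑ j, u j ^ 2) * (∑ j, v j ^ 2)) := by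
    calc ∑ P ∈ od, (c P ^ 2 + c P * c (P.2, P.1))
        ≤ ∑ P ∈ od, (c P ^ 2 + (c P ^ 2 + c (P.2, P.1) ^ 2) / 2) :=
          Finset.sum_le_sum fun P _ => by nlinarith [sq_nonneg (c P - c (P.2, P.1))]
      _ = 2 * ∑ P ∈ od, c P ^ 2 := by
          rw [Finset.sum_add_distrib, ← Finset.sum_div, Finset.sum_add_distrib, hswap_sum]
          ring
      _ ≤ 2 * ∑ P ∈ Finset.univ ×ˢ Finset.univ, c P ^ 2 := by
          have hsub : od ⊆ Finset.univ ×ˢ Finset.univ := by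
            intro P _
            simp [Finset.mem_product]
          have := Finset.sum_le_sum_of_subset_of_nonneg hsub
            (fun P _ _ => sq_nonneg (c P))
          linarith
      _ = 2 * ((∑ j, u j ^ 2) * (∑ j, v j ^ 2)) := by
          rw [Finset.sum_product, Finset.sum_mul_sum]
          congr 1
          refine Finset.sum_congr rfl fun j _ => Finset.sum_congr rfl fun k _ => ?_
          rw [hc]
          ring
  -- decomposition of Y
  have hYae : Y =ᵐ[μ] fun ω => (a ^ 2 * ∑ j, u j * v j) + Z ω := by
    filter_upwards [haeAll] with ω hω
    have expand : Y ω = ∑ P ∈ Finset.univ ×ˢ Finset.univ,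
        (ψ P.1 ω * u P.1) * (ψ P.2 ω * v P.2) := by
      rw [hY]
      dsimp only
      rw [Finset.sum_mul_sum, ← Finset.sum_product']
    rw [expand, ← Finset.diag_union_offDiag (Finset.univ : Finset (Fin n)),
      Finset.sum_union (Finset.disjoint_diag_offDiag _)]
    congr 1
    · rw [Finset.sum_diag, Finset.mul_sum]
      apply Finset.sum_congr rfl
      intro j _
      have h1 : (ψ j ω * u j) * (ψ j ω * v j) = ψ j ω ^ 2 * (u j * v j) := by ring
      rw [h1, hω j]
    · apply Finset.sum_congr rfl
      intro P _
      simp only [hc]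
      ring
  -- MemLp of Y
  have hYmeas : Measurable Y := by
    apply Measurable.mul <;>
      exact Finset.measurable_sum _ fun j _ => (hmeas j).mul_const _
  have hYmem : MemLp Y 2 μ := by
    refine MemLp.of_bound hYmeas.aestronglyMeasurable
      ((∑ j, a * |u j|) * (∑ j, a * |v j|)) ?_
    filter_upwards [habsAll] with ω hω
    rw [Real.norm_eq_abs, hY]
    dsimp only
    rw [abs_mul]
    have h1 : |∑ j, ψ j ω * u j| ≤ ∑ j, a * |u j| :=
      le_trans (Finset.abs_sum_le_sum_abs _ _)
        (Finset.sum_le_sum fun j _ => by rw [abs_mul, hω j])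
    have h2 : |∑ j, ψ j ω * v j| ≤ ∑ j, a * |v j| :=
      le_trans (Finset.abs_sum_le_sum_abs _ _)
        (Finset.sum_le_sum fun j _ => by rw [abs_mul, hω j])
    exact mul_le_mul h1 h2 (abs_nonneg _)
      (Finset.sum_nonneg fun j _ => mul_nonneg ha.le (abs_nonneg _))
  refine ⟨hYmem, ?_⟩
  -- variance computation
  have hvar : variance Y μ = ∫ ω, Z ω ^ 2 ∂μ := by
    rw [aux_variance_congr hYae, aux_variance_const_add _ hZint, variance_eq_sub hZmem]
    simp only [Pi.pow_apply]
    rw [hZmean]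
    ring
  rw [hvar, hZ2]
  calc a ^ 4 * ∑ P ∈ od, (c P ^ 2 + c P * c (P.2, P.1))
      ≤ a ^ 4 * (2 * ((∑ j, u j ^ 2) * (∑ j, v j ^ 2))) :=
        mul_le_mul_of_nonneg_left hsum_bound (by positivity)
    _ = 2 * a ^ 4 * (∑ j, u j ^ 2) * (∑ j, v j ^ 2) := by ring

end Aux

/-- Variance bound for the AMS sketch: if the rows of the random `m × n` matrix `Ψ` are
independent, the entries within each row are 4-wise independent, and each entry is uniform
on `{−1/√m, +1/√m}`, then `Var(⟨Ψu, Ψv⟩) ≤ (2/m)·‖u‖₂²·‖v‖₂²`. -/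
theorem stmt_10 (m n : ℕ) (hm : 0 < m) (hn : 0 < n)
    (Ω : Type*) [MeasurableSpace Ω] (μ : Measure Ω) [IsProbabilityMeasure μ]
    (Ψ : Ω → Matrix (Fin m) (Fin n) ℝ)
    (hmeas : ∀ (i : Fin m) (j : Fin n), Measurable fun ω => Ψ ω i j)
    -- the rows of `Ψ` are independent
    (hrows : iIndepFun
      (fun i : Fin m => fun ω => (fun j => Ψ ω i j)) μ)
    -- within each row, the entries are 4-wise independent
    (h4wise : ∀ (i : Fin m) (s : Finset (Fin n)), s.card ≤ 4 →
      iIndepFun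
        (fun j : {j // j ∈ s} => fun ω => Ψ ω i j.1) μ)
    -- each entry is uniformly distributed on `{−1/√m, +1/√m}`
    (hunif : ∀ (i : Fin m) (j : Fin n),
      μ {ω | Ψ ω i j = 1 / Real.sqrt m} = 1 / 2 ∧
      μ {ω | Ψ ω i j = -(1 / Real.sqrt m)} = 1 / 2)
    (u v : Fin n → ℝ) :
    variance (fun ω => ip ((Ψ ω).mulVec u) ((Ψ ω).mulVec v)) μ ≤
      2 / m * l2norm u ^ 2 * l2norm v ^ 2 := by

  classical
  set a : ℝ := 1 / Real.sqrt m with hadef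
  have hm0 : (0:ℝ) < m := by exact_mod_cast hm
  have hsqrt : (0:ℝ) < Real.sqrt m := Real.sqrt_pos.2 hm0
  have ha : 0 < a := by positivity
  have ha2 : a ^ 2 = 1 / m := by
    rw [hadef, div_pow, one_pow, Real.sq_sqrt hm0.le]
  have ha4 : a ^ 4 = 1 / m ^ 2 := by
    have h : a ^ 4 = (a ^ 2) ^ 2 := by ring
    rw [h, ha2, div_pow, one_pow]
  -- a.e. two-point support and zero mean for each entry
  have hae : ∀ (i : Fin m) (j : Fin n), ∀ᵐ ω ∂μ, Ψ ω i j = a ∨ Ψ ω i j = -a := by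
    intro i j
    have hA := (hunif i j).1
    have hB := (hunif i j).2
    have hAm : MeasurableSet {ω | Ψ ω i j = a} := hmeas i j (measurableSet_singleton a)
    have hBm : MeasurableSet {ω | Ψ ω i j = -a} := hmeas i j (measurableSet_singleton (-a))
    have hdisj : Disjoint {ω | Ψ ω i j = a} {ω | Ψ ω i j = -a} := by
      rw [Set.disjoint_left]
      intro ω h1 h2
      simp only [Set.mem_setOf_eq] at h1 h2
      rw [h1] at h2
      linarith
    have hunion : μ ({ω | Ψ ω i j = a} ∪ {ω | Ψ ω i j = -a}) = 1 := by
      rw [measure_union hdisj hBm, hA, hB, ENNReal.add_halves]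
    have hcompl : μ ({ω | Ψ ω i j = a} ∪ {ω | Ψ ω i j = -a})ᶜ = 0 :=
      (prob_compl_eq_zero_iff (hAm.union hBm)).2 hunion
    rw [ae_iff]
    have hset : {ω | ¬(Ψ ω i j = a ∨ Ψ ω i j = -a)} =
        ({ω | Ψ ω i j = a} ∪ {ω | Ψ ω i j = -a})ᶜ := by
      ext ω
      simp [Set.mem_union, not_or]
    rw [hset]
    exact hcompl
  have hmean : ∀ (i : Fin m) (j : Fin n), ∫ ω, Ψ ω i j ∂μ = 0 := by
    intro i j
    have hA := (hunif i j).1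
    have hB := (hunif i j).2
    have hAm : MeasurableSet {ω | Ψ ω i j = a} := hmeas i j (measurableSet_singleton a)
    have hBm : MeasurableSet {ω | Ψ ω i j = -a} := hmeas i j (measurableSet_singleton (-a))
    have hrepr : (fun ω => Ψ ω i j) =ᵐ[μ] fun ω =>
        Set.indicator {ω' | Ψ ω' i j = a} (fun _ => a) ω +
        Set.indicator {ω' | Ψ ω' i j = -a} (fun _ => -a) ω := by
      filter_upwards [hae i j] with ω hω
      rcases hω with h | h
      · rw [Set.indicator_of_mem (show ω ∈ {ω' | Ψ ω' i j = a} from h),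
          Set.indicator_of_notMem (show ω ∉ {ω' | Ψ ω' i j = -a} by
            simp only [Set.mem_setOf_eq]; rw [h]; intro hcon; linarith)]
        simpa using h
      · rw [Set.indicator_of_notMem (show ω ∉ {ω' | Ψ ω' i j = a} by
            simp only [Set.mem_setOf_eq]; rw [h]; intro hcon; linarith),
          Set.indicator_of_mem (show ω ∈ {ω' | Ψ ω' i j = -a} from h)]
        simpa using h
    rw [integral_congr_ae hrepr,
      integral_add ((integrable_const a).indicator hAm) ((integrable_const (-a)).indicator hBm),
      integral_indicator_const _ hAm, integral_indicator_const _ hBm, measureReal_def, measureReal_def, hA, hB]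
    simp only [smul_eq_mul]
    have : ((1 : ENNReal) / 2).toReal = 1 / 2 := by simp
    rw [this]
    ring
  -- per-row variance bounds
  have hrowfacts : ∀ i : Fin m,
      MemLp (fun ω => (∑ j, Ψ ω i j * u j) * (∑ j, Ψ ω i j * v j)) 2 μ ∧
      variance (fun ω => (∑ j, Ψ ω i j * u j) * (∑ j, Ψ ω i j * v j)) μ ≤
        2 * a ^ 4 * (∑ j, u j ^ 2) * (∑ j, v j ^ 2) :=
    fun i => aux_row_variance ha (fun j => hmeas i j) (h4wise i) (hae i) (hmean i) u v
  set Y : Fin m → Ω → ℝ := fun i ω => (∑ j, Ψ ω i j * u j) * (∑ j, Ψ ω i j * v j) with hYdef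
  have hXeq : (fun ω => ip ((Ψ ω).mulVec u) ((Ψ ω).mulVec v)) = ∑ i, Y i := by
    funext ω
    rw [Finset.sum_apply]
    simp only [ip, Matrix.mulVec, dotProduct, hYdef]
  have hg : Measurable (fun f : Fin n → ℝ => (∑ j, f j * u j) * (∑ j, f j * v j)) :=
    (Finset.measurable_sum _ fun j _ => (measurable_pi_apply j).mul_const _).mul
      (Finset.measurable_sum _ fun j _ => (measurable_pi_apply j).mul_const _)
  have hYindep : iIndepFun Y μ :=
    hrows.comp (fun _ => fun f : Fin n → ℝ => (∑ j, f j * u j) * (∑ j, f j * v j))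
      (fun _ => hg)
  have hvs : variance (∑ i, Y i) μ = ∑ i, variance (Y i) μ :=
    IndepFun.variance_sum (fun i _ => (hrowfacts i).1)
      (fun i _ j _ hij => hYindep.indepFun hij)
  rw [hXeq, hvs]
  have hu : l2norm u ^ 2 = ∑ j, u j ^ 2 := by
    unfold l2norm
    exact Real.sq_sqrt (Finset.sum_nonneg fun j _ => sq_nonneg _)
  have hv : l2norm v ^ 2 = ∑ j, v j ^ 2 := by
    unfold l2norm
    exact Real.sq_sqrt (Finset.sum_nonneg fun j _ => sq_nonneg _)
  calc ∑ i : Fin m, variance (Y i) μ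
      ≤ ∑ i : Fin m, 2 * a ^ 4 * (∑ j, u j ^ 2) * (∑ j, v j ^ 2) :=
        Finset.sum_le_sum fun i _ => (hrowfacts i).2
    _ = m * (2 * a ^ 4 * (∑ j, u j ^ 2) * (∑ j, v j ^ 2)) := by
        rw [Finset.sum_const, Finset.card_univ, Fintype.card_fin, nsmul_eq_mul]
    _ = 2 / m * l2norm u ^ 2 * l2norm v ^ 2 := by
        rw [ha4, hu, hv]
        field_simp
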